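/- Let θ₁(u;τ) = -i ∑_{n∈ℤ} (-1)^n e^{πi(n+1/2)²τ + 2πiu(n+1/2)}. Then for any positive integer K, u ∈ ℂ, τ ∈ ℍ: θ₁(u; τ/K) = ∑_{n=0}^{K-1} q^{(n-(K-1)/2)²/(2K)} e^{2πi(n-(K-1)/2)(u+1/2)} θ₁(Ku + τ(n - (K-1)/2) + (K-1)/2; Kτ), where q = e^{2πiτ}. -/

import Mathlib

open scoped BigOperators
open Complex

/-- The Jacobi theta function
`θ₁(u;τ) = -i ∑_{n∈ℤ} (-1)^n e^{πi(n+1/2)²τ + 2πiu(n+1/2)}`. -/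
noncomputable def theta1 (u τ : ℂ) : ℂ :=
  -I * ∑' n : ℤ,
    (-1 : ℂ) ^ n *
      Complex.exp ((Real.pi : ℂ) * I * ((n : ℂ) + 1 / 2) ^ 2 * τ +
        2 * (Real.pi : ℂ) * I * u * ((n : ℂ) + 1 / 2))

noncomputable def th1term (u τ : ℂ) (n : ℤ) : ℂ :=
  (-1 : ℂ) ^ n *
    Complex.exp ((Real.pi : ℂ) * I * ((n : ℂ) + 1 / 2) ^ 2 * τ +
      2 * (Real.pi : ℂ) * I * u * ((n : ℂ) + 1 / 2))

lemma neg_one_zpow_eq_exp (m : ℤ) :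
    (-1 : ℂ) ^ m = Complex.exp ((Real.pi : ℂ) * I * m) := by
  rw [show (Real.pi : ℂ) * I * m = m * ((Real.pi : ℂ) * I) by ring, Complex.exp_int_mul,
    Complex.exp_pi_mul_I]

lemma th1term_eq (u τ : ℂ) (m : ℤ) :
    th1term u τ m = Complex.exp ((Real.pi : ℂ) * I * τ / 4 + (Real.pi : ℂ) * I * u) *
      jacobiTheta₂_term m (u + τ / 2 + 1 / 2) τ := by
  rw [th1term, jacobiTheta₂_term, neg_one_zpow_eq_exp, ← Complex.exp_add, ← Complex.exp_add]
  congr 1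
  ring

lemma summable_th1term (u τ : ℂ) (h : 0 < τ.im) : Summable (th1term u τ) := by
  have h1 := (summable_jacobiTheta₂_term_iff (u + τ / 2 + 1 / 2) τ).mpr h
  have h2 := h1.mul_left (Complex.exp ((Real.pi : ℂ) * I * τ / 4 + (Real.pi : ℂ) * I * u))
  exact h2.congr fun m => (th1term_eq u τ m).symm

def intFinEquiv (K : ℕ) (hK : 0 < K) : Fin K × ℤ ≃ ℤ where
  toFun p := K * p.2 + (p.1 : ℤ)
  invFun m := (⟨(m % K).toNat, by
      have h0 : (0 : ℤ) < K := by exact_mod_cast hK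
      have h1 := Int.emod_nonneg m h0.ne'
      have h2 := Int.emod_lt_of_pos m h0
      omega⟩, m / K)
  left_inv := by
    rintro ⟨n, j⟩
    have h0 : (0 : ℤ) < K := by exact_mod_cast hK
    have hn0 : (0 : ℤ) ≤ (n : ℤ) := Int.natCast_nonneg _
    have hnK : (n : ℤ) < K := by exact_mod_cast n.isLt
    have hmod : ((K : ℤ) * j + n) % K = n := by
      rw [add_comm, Int.add_mul_emod_self_left, Int.emod_eq_of_lt hn0 hnK]
    have hdiv : ((K : ℤ) * j + n) / K = j := by
      rw [add_comm, Int.add_mul_ediv_left _ _ h0.ne', Int.ediv_eq_zero_of_lt hn0 hnK, zero_add]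
    ext
    · simp [hmod]
    · simp [hdiv]
  right_inv := by
    intro m
    have h0 : (0 : ℤ) < K := by exact_mod_cast hK
    have h1 := Int.emod_nonneg m h0.ne'
    simp only
    rw [Int.toNat_of_nonneg h1, Int.mul_ediv_add_emod]

set_option maxHeartbeats 1600000 in
theorem theta1_tau_div_K (K : ℕ) (hK : 0 < K) (u τ : ℂ) (hτ : 0 < τ.im) :
    theta1 u (τ / K) =
      ∑ n ∈ Finset.range K,
        Complex.exp (2 * (Real.pi : ℂ) * I * τ *
            (((n : ℂ) - ((K : ℂ) - 1) / 2) ^ 2 / (2 * K))) *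
          Complex.exp (2 * (Real.pi : ℂ) * I * ((n : ℂ) - ((K : ℂ) - 1) / 2) * (u + 1 / 2)) *
          theta1 ((K : ℂ) * u + τ * ((n : ℂ) - ((K : ℂ) - 1) / 2) + ((K : ℂ) - 1) / 2)
            ((K : ℂ) * τ) := by
  have hKC : (K : ℂ) ≠ 0 := Nat.cast_ne_zero.mpr hK.ne'
  have hτ' : 0 < (τ / K).im := by
    rw [Complex.div_natCast_im]
    positivity
  have hKτ : 0 < ((K : ℂ) * τ).im := by
    have : ((K : ℂ) * τ).im = K * τ.im := by
      simp [Complex.mul_im]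
    rw [this]
    positivity
  set c : ℕ → ℂ := fun n =>
    Complex.exp (2 * (Real.pi : ℂ) * I * τ * (((n : ℂ) - ((K : ℂ) - 1) / 2) ^ 2 / (2 * K))) *
      Complex.exp (2 * (Real.pi : ℂ) * I * ((n : ℂ) - ((K : ℂ) - 1) / 2) * (u + 1 / 2)) with hc
  have key : ∀ (n : Fin K) (j : ℤ),
      th1term u (τ / K) ((K : ℤ) * j + (n : ℤ)) =
        c n * th1term ((K : ℂ) * u + τ * ((n : ℂ) - ((K : ℂ) - 1) / 2) + ((K : ℂ) - 1) / 2)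
          ((K : ℂ) * τ) j := by
    intro n j
    rw [hc]
    simp only [th1term, neg_one_zpow_eq_exp]
    rw [← Complex.exp_add, ← Complex.exp_add, ← Complex.exp_add, ← Complex.exp_add]
    congr 1
    push_cast
    field_simp
    ring
  have Sf : Summable (th1term u (τ / K)) := summable_th1term u (τ / K) hτ'
  have e := intFinEquiv K hK
  have hSe : Summable fun p : Fin K × ℤ => th1term u (τ / K) (intFinEquiv K hK p) :=
    (Equiv.summable_iff (intFinEquiv K hK)).mpr Sf
  have hfib : ∀ n : Fin K, Summable fun j : ℤ => th1term u (τ / K) (intFinEquiv K hK (n, j)) := by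
    intro n
    apply Sf.comp_injective (i := fun j : ℤ => (K : ℤ) * j + (n : ℤ))
    intro a b hab
    have h0 : (0 : ℤ) < K := by exact_mod_cast hK
    simp only at hab
    have : (K : ℤ) * a = (K : ℤ) * b := by omega
    exact mul_left_cancel₀ h0.ne' this
  calc theta1 u (τ / K) = -I * ∑' m : ℤ, th1term u (τ / K) m := rfl
    _ = -I * ∑' p : Fin K × ℤ, th1term u (τ / K) (intFinEquiv K hK p) := by
        rw [Equiv.tsum_eq (intFinEquiv K hK)]
    _ = -I * ∑ n : Fin K, ∑' j : ℤ, th1term u (τ / K) (intFinEquiv K hK (n, j)) := by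
        rw [Summable.tsum_prod' hSe hfib, tsum_fintype]
    _ = ∑ n : Fin K, -I * ∑' j : ℤ, th1term u (τ / K) (intFinEquiv K hK (n, j)) := by
        rw [Finset.mul_sum]
    _ = ∑ n : Fin K, c n *
          theta1 ((K : ℂ) * u + τ * ((n : ℂ) - ((K : ℂ) - 1) / 2) + ((K : ℂ) - 1) / 2)
            ((K : ℂ) * τ) := by
        refine Finset.sum_congr rfl fun n _ => ?_
        have : ∑' j : ℤ, th1term u (τ / K) (intFinEquiv K hK (n, j)) =
            c n * ∑' j : ℤ, th1term
              ((K : ℂ) * u + τ * ((n : ℂ) - ((K : ℂ) - 1) / 2) + ((K : ℂ) - 1) / 2)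
              ((K : ℂ) * τ) j := by
          rw [← tsum_mul_left]
          exact tsum_congr fun j => key n j
        rw [this, show theta1 ((K : ℂ) * u + τ * ((n : ℂ) - ((K : ℂ) - 1) / 2) + ((K : ℂ) - 1) / 2)
            ((K : ℂ) * τ) = -I * ∑' j : ℤ, th1term
              ((K : ℂ) * u + τ * ((n : ℂ) - ((K : ℂ) - 1) / 2) + ((K : ℂ) - 1) / 2)
              ((K : ℂ) * τ) j from rfl]
        ring
    _ = ∑ n ∈ Finset.range K, c n *
          theta1 ((K : ℂ) * u + τ * ((n : ℂ) - ((K : ℂ) - 1) / 2) + ((K : ℂ) - 1) / 2)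
            ((K : ℂ) * τ) := by
        rw [← Fin.sum_univ_eq_sum_range]
    _ = _ := by simp [hc]
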